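/- Fix r > 0, let σ(x) = 1/(1+e^{−x}), g_r(c) := σ(1/(rc))σ(−1/(rc))/(rc²) for c > 0, and let x* be the unique positive solution of tanh(1/x) = x. Then there exists c > 0 with g_r(c) > 1 if and only if r > (x*)²/(1−(x*)²). -/

import Mathlib

/-- The logistic function `σ(x) = 1/(1+e^{-x})`. -/
noncomputable def logistic (x : ℝ) : ℝ := 1 / (1 + Real.exp (-x))

/-- Tangent-line inequality for `cosh` (convexity). -/
lemma cosh_tangent (a b : ℝ) : Real.cosh a + Real.sinh a * (b - a) ≤ Real.cosh b := by
  have h1 : 1 + (b - a) ≤ Real.exp (b - a) := by linarith [Real.add_one_le_exp (b - a)]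
  have h2 : 1 + (a - b) ≤ Real.exp (a - b) := by linarith [Real.add_one_le_exp (a - b)]
  have e1 : Real.exp a * (1 + (b - a)) ≤ Real.exp b := by
    calc Real.exp a * (1 + (b - a)) ≤ Real.exp a * Real.exp (b - a) :=
          mul_le_mul_of_nonneg_left h1 (Real.exp_pos a).le
      _ = Real.exp b := by rw [← Real.exp_add]; ring_nf
  have e2 : Real.exp (-a) * (1 + (a - b)) ≤ Real.exp (-b) := by
    calc Real.exp (-a) * (1 + (a - b)) ≤ Real.exp (-a) * Real.exp (a - b) :=
          mul_le_mul_of_nonneg_left h2 (Real.exp_pos (-a)).le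
      _ = Real.exp (-b) := by rw [← Real.exp_add]; ring_nf
  rw [Real.cosh_eq, Real.sinh_eq, Real.cosh_eq]
  nlinarith [e1, e2]

lemma logistic_mul (u : ℝ) :
    logistic u * logistic (-u) = 1 / (2 + 2 * Real.cosh u) := by
  unfold logistic
  rw [Real.cosh_eq, neg_neg]
  have h1 : 0 < 1 + Real.exp (-u) := by positivity
  have h2 : 0 < 1 + Real.exp u := by positivity
  have h3 : Real.exp (-u) * Real.exp u = 1 := by rw [← Real.exp_add]; simp
  have h4 : (0:ℝ) < 2 + 2 * ((Real.exp u + Real.exp (-u)) / 2) := by positivity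
  field_simp
  nlinarith [h3]

/-- For fixed `r > 0`, with `g_r(c) = σ(1/(rc)) σ(-1/(rc)) / (rc²)` and `x*` the unique
positive solution of `tanh(1/x) = x`, there exists `c > 0` with `g_r(c) > 1` if and
only if `r > (x*)²/(1-(x*)²)`. -/
theorem qER_transition_criterion (r : ℝ) (hr : 0 < r)
    (xs : ℝ) (hxs : 0 < xs) (hsol : Real.tanh (1 / xs) = xs)
    (huniq : ∀ y : ℝ, 0 < y → Real.tanh (1 / y) = y → y = xs) :
    (∃ c : ℝ, 0 < c ∧
        1 < logistic (1 / (r * c)) * logistic (-(1 / (r * c))) / (r * c ^ 2)) ↔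
      xs ^ 2 / (1 - xs ^ 2) < r := by
  set s : ℝ := xs⁻¹ with hs_def
  have hspos : 0 < s := inv_pos.mpr hxs
  have htanh : Real.tanh s = xs := by rw [hs_def, ← one_div]; exact hsol
  have hcosh_pos : 0 < Real.cosh s := Real.cosh_pos s
  have hsinh_eq : Real.sinh s = xs * Real.cosh s := by
    have h := Real.tanh_eq_sinh_div_cosh s
    rw [htanh] at h
    field_simp at h
    linarith [h]
  have hx1 : xs < 1 := by
    have h : Real.cosh s - Real.sinh s = Real.exp (-s) := by
      rw [Real.cosh_eq, Real.sinh_eq]; ring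
    nlinarith [Real.exp_pos (-s), hcosh_pos]
  have hxs2 : 0 < 1 - xs ^ 2 := by nlinarith
  have hc2 : (1 - xs ^ 2) * Real.cosh s ^ 2 = 1 := by
    have h2 : Real.sinh s ^ 2 = xs ^ 2 * Real.cosh s ^ 2 := by rw [hsinh_eq]; ring
    linear_combination Real.cosh_sq s + h2
  have hssinh : s * Real.sinh s = Real.cosh s := by
    rw [hsinh_eq, hs_def]
    field_simp
  have hs2 : s ^ 2 * xs ^ 2 = 1 := by rw [hs_def]; field_simp
  -- key global inequality : t * cosh s ≤ s * cosh t for all t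
  have key : ∀ t : ℝ, t * Real.cosh s ≤ s * Real.cosh t := by
    intro t
    have htan := cosh_tangent s t
    calc t * Real.cosh s
        = s * (Real.cosh s + Real.sinh s * (t - s))
          - (s * Real.sinh s - Real.cosh s) * (t - s) - s * Real.cosh s
          + s * Real.cosh s := by ring
      _ = s * (Real.cosh s + Real.sinh s * (t - s)) := by rw [hssinh]; ring
      _ ≤ s * Real.cosh t := by nlinarith [htan, hspos]
  constructor
  · rintro ⟨c, hc, hgt⟩
    have hrc : 0 < r * c := mul_pos hr hc
    set t : ℝ := 1 / (2 * (r * c)) with ht_def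
    have htpos : 0 < t := by positivity
    have hu : 1 / (r * c) = 2 * t := by rw [ht_def]; field_simp
    rw [hu, logistic_mul, Real.cosh_two_mul] at hgt
    have hcsq : Real.cosh t ^ 2 + Real.sinh t ^ 2 = 2 * Real.cosh t ^ 2 - 1 := by
      linear_combination - Real.cosh_sq t
    rw [hcsq, div_div] at hgt
    have hdpos : (0:ℝ) < 2 + 2 * (2 * Real.cosh t ^ 2 - 1) := by
      nlinarith [Real.cosh_pos t]
    have hlt1 : (2 + 2 * (2 * Real.cosh t ^ 2 - 1)) * (r * c ^ 2) < 1 :=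
      (one_lt_div (by positivity)).mp hgt
    have hcc : c = 1 / (2 * r * t) := by
      rw [ht_def]
      field_simp
    have hA : Real.cosh t ^ 2 / (r * t ^ 2) < 1 := by
      have heq : (2 + 2 * (2 * Real.cosh t ^ 2 - 1)) * (r * c ^ 2)
          = Real.cosh t ^ 2 / (r * t ^ 2) := by
        rw [hcc]; field_simp; ring
      rwa [heq] at hlt1
    have hCt : Real.cosh t ^ 2 < r * t ^ 2 :=
      (div_lt_one (by positivity)).mp hA
    -- square the key inequality at t
    have kt := key t
    have hsq : t ^ 2 * Real.cosh s ^ 2 ≤ s ^ 2 * Real.cosh t ^ 2 := by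
      have h := mul_self_le_mul_self (by positivity : (0:ℝ) ≤ t * Real.cosh s) kt
      linarith [h, sq_abs t]
      
    have hfin : Real.cosh s ^ 2 < r * s ^ 2 := by
      have p1 := mul_lt_mul_of_pos_left hCt (by positivity : (0:ℝ) < Real.cosh s ^ 2)
      have p2 := mul_le_mul_of_nonneg_left hsq hr.le
      have h : Real.cosh s ^ 2 * Real.cosh t ^ 2 < (r * s ^ 2) * Real.cosh t ^ 2 := by
        nlinarith [p1, p2]
      exact lt_of_mul_lt_mul_right h (by positivity)
    rw [div_lt_iff₀ hxs2]
    have l1 : ((1 - xs ^ 2) * xs ^ 2) * Real.cosh s ^ 2 = xs ^ 2 := by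
      linear_combination xs ^ 2 * hc2
    have l2 : ((1 - xs ^ 2) * xs ^ 2) * (r * s ^ 2) = r * (1 - xs ^ 2) := by
      linear_combination r * (1 - xs ^ 2) * hs2
    have hmul := mul_lt_mul_of_pos_left hfin
      (by positivity : (0:ℝ) < (1 - xs ^ 2) * xs ^ 2)
    linarith [hmul, l1, l2]
  · intro hlt
    refine ⟨xs / (2 * r), by positivity, ?_⟩
    have hu : 1 / (r * (xs / (2 * r))) = 2 * s := by
      rw [hs_def]; field_simp
    rw [hu, logistic_mul, Real.cosh_two_mul]
    have hcsq : Real.cosh s ^ 2 + Real.sinh s ^ 2 = 2 * Real.cosh s ^ 2 - 1 := by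
      linear_combination - Real.cosh_sq s
    rw [hcsq, div_div]
    have hx2 : xs ^ 2 < r * (1 - xs ^ 2) := by
      have := (div_lt_iff₀ hxs2).mp hlt
      linarith [this]
    have hdpos2 : (0:ℝ) < 2 + 2 * (2 * Real.cosh s ^ 2 - 1) := by nlinarith [hcosh_pos]
    rw [one_lt_div (mul_pos hdpos2 (by positivity : (0:ℝ) < r * (xs / (2 * r)) ^ 2))]
    have hexp : (2 + 2 * (2 * Real.cosh s ^ 2 - 1)) * (r * (xs / (2 * r)) ^ 2)
        = Real.cosh s ^ 2 * xs ^ 2 / r := by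
      field_simp; ring
    rw [hexp, div_lt_one hr]
    have l1 : (Real.cosh s ^ 2 * xs ^ 2) * (1 - xs ^ 2) = xs ^ 2 := by
      linear_combination xs ^ 2 * hc2
    have h : (Real.cosh s ^ 2 * xs ^ 2) * (1 - xs ^ 2) < r * (1 - xs ^ 2) := by
      rw [l1]; exact hx2
    exact lt_of_mul_lt_mul_right h hxs2.le
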